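/- Fix d ≥ 2 and p ∈ (0,1), and let f be the pmf on {0,1}^d with f((0,…,0)) = 1-p, f((1,…,1)) = p, and f(i) = 0 otherwise. Then Kendall's tau of the corresponding GFGM copula satisfies τ = ( p(1-p)/(2^{d-1}-1) )·( (3-p)^d - 2(2-p)^d + (1-p)^d )/(2-p)^d, where τ = (1/(2^{d-1}-1))·( 2^d·Σ_{i,j∈{0,1}^d} f(i)f(j)·Π_{m=1}^d ( 1/2 - (i_m+j_m)/(2p) + (j_m(1-p)+i_m)/(p(2-p)) ) - 1 ). -/

import Mathlib

open MeasureTheory ProbabilityTheory Set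

/-- The real value (`0` or `1`) of a Bernoulli outcome. -/
noncomputable def bval (b : Bool) : ℝ := if b then 1 else 0

/-- Fix `d ≥ 2` and `p ∈ (0,1)`, and let `f` be the pmf of the comonotonic Bernoulli
vector with all margins `p`.  Then Kendall's tau of the corresponding GFGM copula equals
`τ = (p(1-p)/(2^{d-1}-1)) ((3-p)^d - 2(2-p)^d + (1-p)^d)/(2-p)^d`. -/
theorem gfgm_epd_kendall_tau
    (d : ℕ) (hd : 2 ≤ d) (p : ℝ) (hp : p ∈ Ioo (0 : ℝ) 1)
    (f : (Fin d → Bool) → ℝ)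
    (hf : ∀ i, f i = if i = (fun _ => false) then 1 - p
      else if i = (fun _ => true) then p else 0) :
    (1 / ((2 : ℝ) ^ (d - 1) - 1)) *
        ((2 : ℝ) ^ d * (∑ i : Fin d → Bool, ∑ j : Fin d → Bool, f i * f j *
          ∏ m, (1 / 2 - (bval (i m) + bval (j m)) / (2 * p)
            + (bval (j m) * (1 - p) + bval (i m)) / (p * (2 - p)))) - 1)
      = (p * (1 - p) / ((2 : ℝ) ^ (d - 1) - 1)) *
          (((3 - p) ^ d - 2 * (2 - p) ^ d + (1 - p) ^ d) / (2 - p) ^ d) := by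
  obtain ⟨hp0, hp1⟩ := hp
  have hpne : p ≠ 0 := ne_of_gt hp0
  have h2p : (2 : ℝ) - p ≠ 0 := by nlinarith
  have h2pd : ((2 : ℝ) - p) ^ d ≠ 0 := pow_ne_zero _ h2p
  set c0 : Fin d → Bool := fun _ => false with hc0
  set c1 : Fin d → Bool := fun _ => true with hc1
  have hne : c0 ≠ c1 := by
    intro h
    have := congrFun h ⟨0, by omega⟩
    simp [c0, c1] at this
  have hf0 : f c0 = 1 - p := by rw [hf]; simp [c0]
  have hf1 : f c1 = p := by rw [hf]; simp [c1, if_neg (Ne.symm hne)]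
  have hfz : ∀ i, i ≠ c0 → i ≠ c1 → f i = 0 := by
    intro i h0 h1
    rw [hf]; simp [hc0 ▸ h0, hc1 ▸ h1, h0, h1]
  set G : (Fin d → Bool) → (Fin d → Bool) → ℝ := fun i j =>
    ∏ m, (1 / 2 - (bval (i m) + bval (j m)) / (2 * p)
            + (bval (j m) * (1 - p) + bval (i m)) / (p * (2 - p))) with hG
  have key : ∀ (g : (Fin d → Bool) → ℝ),
      (∀ i, i ≠ c0 → i ≠ c1 → g i = 0) →
      ∑ i : Fin d → Bool, g i = g c0 + g c1 := by
    intro g hg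
    rw [← Finset.sum_pair hne]
    refine (Finset.sum_subset (Finset.subset_univ _) ?_).symm
    intro i _ hi
    simp only [Finset.mem_insert, Finset.mem_singleton, not_or] at hi
    exact hg i hi.1 hi.2
  have hinner : ∀ i, (∑ j : Fin d → Bool, f i * f j * G i j)
      = f i * f c0 * G i c0 + f i * f c1 * G i c1 :=
    fun i => key _ (fun j h0 h1 => by simp [hfz j h0 h1])
  have hsum : (∑ i : Fin d → Bool, ∑ j : Fin d → Bool, f i * f j * G i j)
      = f c0 * f c0 * G c0 c0 + f c0 * f c1 * G c0 c1
        + (f c1 * f c0 * G c1 c0 + f c1 * f c1 * G c1 c1) := by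
    rw [key _ (fun i h0 h1 => by simp [hfz i h0 h1]), hinner, hinner]
  have hcard : (Finset.univ : Finset (Fin d)).card = d := by simp
  have hb0 : bval false = 0 := by simp [bval]
  have hb1 : bval true = 1 := by simp [bval]
  have G00 : G c0 c0 = (1 / 2 : ℝ) ^ d := by
    have hfac : (1:ℝ) / 2 - (0 + 0) / (2 * p) + (0 * (1 - p) + 0) / (p * (2 - p))
        = 1 / 2 := by norm_num
    rw [hG]
    simp only [c0, hb0]
    rw [hfac, Finset.prod_const, hcard]
  have G11 : G c1 c1 = (1 / 2 : ℝ) ^ d := by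
    have hfac : (1:ℝ) / 2 - (1 + 1) / (2 * p) + (1 * (1 - p) + 1) / (p * (2 - p))
        = 1 / 2 := by field_simp; ring
    rw [hG]
    simp only [c0, c1, hb0, hb1]
    rw [hfac, Finset.prod_const, hcard]
  have G01 : G c0 c1 = ((1 - p) / (2 * (2 - p))) ^ d := by
    have hfac : (1:ℝ) / 2 - (0 + 1) / (2 * p) + (1 * (1 - p) + 0) / (p * (2 - p))
        = (1 - p) / (2 * (2 - p)) := by field_simp; ring
    rw [hG]
    simp only [c0, c1, hb0, hb1]
    rw [hfac, Finset.prod_const, hcard]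
  have G10 : G c1 c0 = ((3 - p) / (2 * (2 - p))) ^ d := by
    have hfac : (1:ℝ) / 2 - (1 + 0) / (2 * p) + (0 * (1 - p) + 1) / (p * (2 - p))
        = (3 - p) / (2 * (2 - p)) := by field_simp; ring
    rw [hG]
    simp only [c0, c1, hb0, hb1]
    rw [hfac, Finset.prod_const, hcard]
  rw [show (∑ i : Fin d → Bool, ∑ j : Fin d → Bool, f i * f j *
          ∏ m, (1 / 2 - (bval (i m) + bval (j m)) / (2 * p)
            + (bval (j m) * (1 - p) + bval (i m)) / (p * (2 - p))))
      = ∑ i : Fin d → Bool, ∑ j : Fin d → Bool, f i * f j * G i j from rfl,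
    hsum, hf0, hf1, G00, G11, G01, G10]
  have key2 : (2:ℝ) ^ d * ((1 - p) * (1 - p) * (1 / 2) ^ d
      + (1 - p) * p * ((1 - p) / (2 * (2 - p))) ^ d
      + (p * (1 - p) * ((3 - p) / (2 * (2 - p))) ^ d + p * p * (1 / 2) ^ d)) - 1
      = p * (1 - p) * (((3 - p) ^ d - 2 * (2 - p) ^ d + (1 - p) ^ d) / (2 - p) ^ d) := by
    have h2 : (2:ℝ) ^ d ≠ 0 := by positivity
    rw [div_pow, div_pow, div_pow, mul_pow]
    field_simp
    ring
  rw [div_mul_eq_mul_div, div_mul_eq_mul_div, one_mul]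
  rw [key2]
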